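/- Strict unimodality of the energy-per-bit function: The function ξ(r) = (P(r) + ρ)/r is strictly decreasing on (0, r_ee] and strictly increasing on [r_ee, ∞); consequently ξ is quasi-convex on (0, ∞) and r_ee is its unique global minimizer. -/

import Mathlib

open Real Finset

/-- Transmit-power function `P(r) = (e^r - 1)/g` for channel power gain `g`. -/
noncomputable def P (g r : ℝ) : ℝ := (Real.exp r - 1) / g

/-- Energy-efficiency (energy-per-bit) ratio `ξ(r) = (P(r) + ρ)/r`. -/
noncomputable def xi (g ρ r : ℝ) : ℝ := (P g r + ρ) / r

/-- Auxiliary function: numerator of the derivative of `xi`. -/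
noncomputable def hfun (g ρ r : ℝ) : ℝ := (Real.exp r / g) * r - ((Real.exp r - 1) / g + ρ)

lemma hasDerivAt_xi (g ρ r : ℝ) (hr : r ≠ 0) :
    HasDerivAt (xi g ρ) (hfun g ρ r / r ^ 2) r := by
  have h1 : HasDerivAt (fun r => (Real.exp r - 1) / g + ρ) (Real.exp r / g) r := by
    simpa using (((Real.hasDerivAt_exp r).sub_const 1).div_const g).add_const ρ
  have H := h1.div (hasDerivAt_id r) hr
  have hx : xi g ρ = fun x => ((Real.exp x - 1) / g + ρ) / x := by
    funext x; simp [xi, P]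
  rw [hx]
  refine (show HasDerivAt (fun x => ((Real.exp x - 1) / g + ρ) / x) _ r from H).congr_deriv ?_
  simp only [hfun, id]
  field_simp

lemma hfun_strictMono (g ρ : ℝ) (hg : 0 < g) : StrictMonoOn (hfun g ρ) (Set.Ici 0) := by
  have hd : ∀ r : ℝ, HasDerivAt (hfun g ρ) (r * Real.exp r / g) r := by
    intro r
    have h1 : HasDerivAt (fun r => (Real.exp r / g) * r)
        (Real.exp r / g * r + Real.exp r / g * 1) r :=
      ((Real.hasDerivAt_exp r).div_const g).mul (hasDerivAt_id r)
    have h2 : HasDerivAt (fun r => (Real.exp r - 1) / g + ρ) (Real.exp r / g) r := by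
      simpa using (((Real.hasDerivAt_exp r).sub_const 1).div_const g).add_const ρ
    have := h1.sub h2
    refine (show HasDerivAt (hfun g ρ) _ r from this).congr_deriv ?_
    ring
  apply strictMonoOn_of_deriv_pos (convex_Ici 0)
  · exact fun r _ => (hd r).continuousAt.continuousWithinAt
  · intro r hr
    rw [interior_Ici] at hr
    rw [(hd r).deriv]
    have hr' : 0 < r := hr
    positivity

/-- **Strict unimodality of the energy-per-bit function.** `ξ(r) = (P(r) + ρ)/r` is
strictly decreasing on `(0, r_ee]` and strictly increasing on `[r_ee, ∞)`; consequently
`ξ` is quasi-convex on `(0, ∞)` and `r_ee` is its unique global minimizer there. -/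
theorem xi_strict_unimodality
    (g ρ ree : ℝ) (hg : 0 < g) (hρ : 0 < ρ)
    (hree_pos : 0 < ree)
    (hree_min : ∀ r : ℝ, 0 < r → r ≠ ree → xi g ρ ree < xi g ρ r) :
    StrictAntiOn (xi g ρ) (Set.Ioc 0 ree) ∧
    StrictMonoOn (xi g ρ) (Set.Ici ree) ∧
    QuasiconvexOn ℝ (Set.Ioi 0) (xi g ρ) ∧
    (∀ r : ℝ, 0 < r → xi g ρ ree ≤ xi g ρ r) ∧
    (∀ r : ℝ, 0 < r → xi g ρ r = xi g ρ ree → r = ree) := by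
  have hmin : IsLocalMin (xi g ρ) ree := by
    filter_upwards [eventually_gt_nhds hree_pos] with x hx
    rcases eq_or_ne x ree with h | h
    · simp [h]
    · exact (hree_min x hx h).le
  have hzero : hfun g ρ ree = 0 := by
    have := hmin.hasDerivAt_eq_zero (hasDerivAt_xi g ρ ree hree_pos.ne')
    have h2 : ree ^ 2 ≠ 0 := pow_ne_zero _ hree_pos.ne'
    field_simp at this
    simpa using this
  have hsm := hfun_strictMono g ρ hg
  have hanti : StrictAntiOn (xi g ρ) (Set.Ioc 0 ree) := by
    apply strictAntiOn_of_deriv_neg (convex_Ioc 0 ree)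
    · exact fun r hr => (hasDerivAt_xi g ρ r (ne_of_gt hr.1)).continuousAt.continuousWithinAt
    · intro r hr
      rw [interior_Ioc] at hr
      rw [(hasDerivAt_xi g ρ r (ne_of_gt hr.1)).deriv]
      have : hfun g ρ r < 0 := by
        have := hsm (le_of_lt hr.1) hree_pos.le hr.2
        linarith
      have hrp : 0 < r := hr.1
      have h2 : (0:ℝ) < r ^ 2 := by positivity
      exact div_neg_of_neg_of_pos this h2
  have hmono : StrictMonoOn (xi g ρ) (Set.Ici ree) := by
    apply strictMonoOn_of_deriv_pos (convex_Ici ree)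
    · exact fun r hr => (hasDerivAt_xi g ρ r
        (ne_of_gt (lt_of_lt_of_le hree_pos hr))).continuousAt.continuousWithinAt
    · intro r hr
      rw [interior_Ici] at hr
      have hrpos : 0 < r := hree_pos.trans hr
      rw [(hasDerivAt_xi g ρ r hrpos.ne').deriv]
      have : 0 < hfun g ρ r := by
        have := hsm hree_pos.le (le_of_lt hrpos) hr
        linarith
      have h2 : (0:ℝ) < r ^ 2 := by positivity
      exact div_pos this h2
  refine ⟨hanti, hmono, ?_, ?_, ?_⟩
  · intro b
    have hoc : Set.OrdConnected {x | x ∈ Set.Ioi (0:ℝ) ∧ xi g ρ x ≤ b} := by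
      constructor
      rintro x ⟨hx0, hxb⟩ y ⟨hy0, hyb⟩ z ⟨hxz, hzy⟩
      have hz0 : (0:ℝ) < z := lt_of_lt_of_le hx0 hxz
      refine ⟨hz0, ?_⟩
      rcases le_total z ree with h | h
      · rcases eq_or_lt_of_le hxz with rfl | hlt
        · exact hxb
        · have := hanti ⟨hx0, hxz.trans h⟩ ⟨hz0, h⟩ hlt
          linarith
      · rcases eq_or_lt_of_le hzy with rfl | hlt
        · exact hyb
        · have := hmono h (h.trans hzy) hlt
          linarith
    exact hoc.convex
  · intro r hr
    rcases eq_or_ne r ree with h | h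
    · simp [h]
    · exact (hree_min r hr h).le
  · intro r hr heq
    by_contra h
    exact absurd heq (ne_of_gt (hree_min r hr h))
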